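/- If μ ≥ η̃ > 0 and ν = 9η̃μ/(4μ−η̃) (sharp causality), then for all v ∈ ℝ the determinant of B(v) equals ν((μ−η̃) − (8μ+η̃)v²); in particular det B(v) < 0 whenever v² > 1/8. -/

import Mathlib

open Real Matrix Filter Topology Set

noncomputable section

/-- The state space condition `ψ⁰ > |ψ¹|`. -/
def StateSpace (ψ : Fin 2 → ℝ) : Prop := |ψ 1| < ψ 0

/-- Temperature variable `θ(ψ) = ((ψ⁰)² − (ψ¹)²)^(−1/2)`. -/
def θf (ψ : Fin 2 → ℝ) : ℝ := (Real.sqrt ((ψ 0) ^ 2 - (ψ 1) ^ 2))⁻¹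

/-- `u(ψ) = θ(ψ) ψ⁰`. -/
def uf (ψ : Fin 2 → ℝ) : ℝ := θf ψ * ψ 0

/-- `v(ψ) = θ(ψ) ψ¹`. -/
def vf (ψ : Fin 2 → ℝ) : ℝ := θf ψ * ψ 1

/-- Ideal stress component `T⁰¹`. -/
def T01 (ψ : Fin 2 → ℝ) : ℝ := (4 / 3) * (θf ψ) ^ 4 * uf ψ * vf ψ

/-- Ideal stress component `T¹¹`. -/
def T11 (ψ : Fin 2 → ℝ) : ℝ := (θf ψ) ^ 4 * ((4 / 3) * (vf ψ) ^ 2 + 1 / 3)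

/-- `u = √(1+v²)` as a function of the velocity `v`. -/
def uu (v : ℝ) : ℝ := Real.sqrt (1 + v ^ 2)

/-- Viscosity matrix `B̃_visc(v)`. -/
def Bvisc (v : ℝ) : Matrix (Fin 2) (Fin 2) ℝ :=
  !![(uu v) ^ 2 * v ^ 2, -((uu v) ^ 3 * v); -((uu v) ^ 3 * v), (uu v) ^ 4]

/-- Thermal regulator matrix `B_ther(v)`. -/
def Bther (v : ℝ) : Matrix (Fin 2) (Fin 2) ℝ :=
  !![16 * (uu v) ^ 2 * v ^ 2, -(4 * uu v * v * (4 * v ^ 2 + 1));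
     -(4 * uu v * v * (4 * v ^ 2 + 1)), (4 * v ^ 2 + 1) ^ 2]

/-- Velocity regulator matrix `B_velo(v)`. -/
def Bvelo (v : ℝ) : Matrix (Fin 2) (Fin 2) ℝ :=
  !![((uu v) ^ 2 + v ^ 2) ^ 2, -(2 * ((uu v) ^ 2 + v ^ 2) * uu v * v);
     -(2 * ((uu v) ^ 2 + v ^ 2) * uu v * v), 4 * (uu v) ^ 2 * v ^ 2]

/-- The full dissipation matrix `B(v) = η̃ B̃_visc − μ B_ther − ν B_velo`. -/
def Bmat (η μ ν v : ℝ) : Matrix (Fin 2) (Fin 2) ℝ :=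
  η • Bvisc v - μ • Bther v - ν • Bvelo v

/-- The (rescaled) flux Jacobian `A(v)`. -/
def Amat (v : ℝ) : Matrix (Fin 2) (Fin 2) ℝ :=
  !![v * (6 * (uu v) ^ 2 - 1), -(uu v * (6 * v ^ 2 + 1));
     -(uu v * (6 * v ^ 2 + 1)), v * (6 * v ^ 2 + 3)]

/-- Upstream velocity `v₋(q̃)`. -/
def vminus (q : ℝ) : ℝ :=
  Real.sqrt (((2 * q - 1) + Real.sqrt (q * (4 * q - 3))) / (4 * (1 - q)))

/-- Downstream velocity `v₊(q̃)`. -/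
def vplus (q : ℝ) : ℝ :=
  Real.sqrt (((2 * q - 1) - Real.sqrt (q * (4 * q - 3))) / (4 * (1 - q)))

/-- The state `ψ` with velocity `v` on the Hugoniot curve `T¹¹ = 1`. -/
def psiOf (v : ℝ) : Fin 2 → ℝ :=
  ((4 / 3) * v ^ 2 + 1 / 3) ^ ((1 : ℝ) / 4) • ![Real.sqrt (1 + v ^ 2), v]

/-- Upstream state `ψ₋(q̃)`. -/
def psiMinus (q : ℝ) : Fin 2 → ℝ := psiOf (vminus q)

/-- Downstream state `ψ₊(q̃)`. -/
def psiPlus (q : ℝ) : Fin 2 → ℝ := psiOf (vplus q)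

/-- `ψ : ℝ → Ψ` is a C¹ solution of the profile ODE
`B(v(ψ))·ψ' = (T⁰¹(ψ) − q̃^(−1/2), T¹¹(ψ) − 1)`. -/
def ProfileSolution (η μ ν q : ℝ) (ψ : ℝ → Fin 2 → ℝ) : Prop :=
  ContDiff ℝ 1 ψ ∧ (∀ t, StateSpace (ψ t)) ∧
  ∀ t, (Bmat η μ ν (vf (ψ t))).mulVec (deriv ψ t) =
    ![T01 (ψ t) - (Real.sqrt q)⁻¹, T11 (ψ t) - 1]

end

/-- In the sharply causal case `ν = 9η̃μ/(4μ−η̃)`, `det B(v) = ν((μ−η̃) − (8μ+η̃)v²)`,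
hence `det B(v) < 0` whenever `v² > 1/8`. -/
theorem det_B_sharply_causal (η μ : ℝ) (hη : 0 < η) (hμ : η ≤ μ) (v : ℝ) :
    (Bmat η μ (9 * η * μ / (4 * μ - η)) v).det =
      (9 * η * μ / (4 * μ - η)) * ((μ - η) - (8 * μ + η) * v ^ 2) ∧
    (1 / 8 < v ^ 2 → (Bmat η μ (9 * η * μ / (4 * μ - η)) v).det < 0) := by
  have h4 : (4 * μ - η) ≠ 0 := by nlinarith
  set ν : ℝ := 9 * η * μ / (4 * μ - η) with hν
  have hν' : ν * (4 * μ - η) = 9 * η * μ := by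
    rw [hν]; exact div_mul_cancel₀ _ h4
  have hu2 : uu v ^ 2 = 1 + v ^ 2 := Real.sq_sqrt (by positivity)
  have hdet : (Bmat η μ ν v).det = ν * ((μ - η) - (8 * μ + η) * v ^ 2) := by
    apply mul_left_cancel₀ h4
    simp only [Bmat, Bvisc, Bther, Bvelo, Matrix.det_fin_two, Matrix.sub_apply,
      Matrix.smul_apply, Matrix.of_apply, Matrix.cons_val', Matrix.cons_val_zero,
      Matrix.cons_val_one, Matrix.head_cons, Matrix.head_fin_const, Matrix.empty_val',
      Matrix.cons_val_fin_one, smul_eq_mul]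
    linear_combination ((4)*μ^2*ν + (-5)*η*μ*ν + η^2*ν + (-20)*v^2*μ^2*ν + v^2*η*μ*ν
      + (-36)*v^2*η*μ^2 + v^2*η^2*ν + (9)*v^2*η^2*μ + (32)*v^4*μ^2*ν + (-8)*v^4*η*μ*ν
      + (-64)*v^6*μ^2*ν + (16)*v^6*η*μ*ν + (4)*(uu v)^2*μ^2*ν + (-5)*(uu v)^2*η*μ*ν
      + (uu v)^2*η^2*ν + (-32)*(uu v)^2*v^2*μ^2*ν + (8)*(uu v)^2*v^2*η*μ*ν
      + (-32)*(uu v)^2*v^2*η*μ^2 + (8)*(uu v)^2*v^2*η^2*μ + (64)*(uu v)^2*v^4*μ^2*ν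
      + (-16)*(uu v)^2*v^4*η*μ*ν + (64)*(uu v)^2*v^4*η*μ^2 + (-16)*(uu v)^2*v^4*η^2*μ
      + (-4)*(uu v)^4*η*μ*ν + (uu v)^4*η^2*ν + (4)*(uu v)^4*v^2*η*μ*ν
      + (-64)*(uu v)^4*v^2*η*μ^2 + (-1)*(uu v)^4*v^2*η^2*ν + (16)*(uu v)^4*v^2*η^2*μ
      + (-4)*(uu v)^6*η*μ*ν + (uu v)^6*η^2*ν) * hu2
      + (v^2*(1+v^2)*(4*μ-η)) * hν'
  refine ⟨hdet, fun hv => ?_⟩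
  rw [hdet]
  have hν0 : 0 < ν := by
    rw [hν]
    exact div_pos (by nlinarith) (by nlinarith)
  have : (μ - η) - (8 * μ + η) * v ^ 2 < 0 := by nlinarith
  exact mul_neg_of_pos_of_neg hν0 this
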